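/- Let C be a nonempty unbounded closed convex subset of a real normed linear space X having the strong separation property, and assume at least one of the following conditions holds: (A) X is a reflexive Banach space and Int barc(C) ≠ ∅; (B) C is locally compact; (C) there exist r > 0 and a finite-dimensional linear subspace Z ⊆ X with C ⊆ B(0; r) + Z. Then the closure of the affine hull of C equals X. Furthermore, if C is finite-dimensional (i.e. aff(C) is finite-dimensional), then aff(C) = X and the interior of C is nonempty. -/

import Mathlib

open Filter Topology Pointwise

/-- The barrier cone of a set `C` in a normed space. -/
def barrierCone {X : Type*} [NormedAddCommGroup X] [NormedSpace ℝ X] (C : Set X) :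
    Set (X →L[ℝ] ℝ) :=
  {f | ∃ b : ℝ, ∀ c ∈ C, f c ≤ b}

/-- `C` and `D` are strongly separated. -/
def StronglySeparated {X : Type*} [NormedAddCommGroup X] [NormedSpace ℝ X]
    (C D : Set X) : Prop :=
  ∃ f : X →L[ℝ] ℝ, f ≠ 0 ∧ ∃ a b : ℝ, a < b ∧ (∀ c ∈ C, f c ≤ a) ∧ ∀ d ∈ D, b ≤ f d

/-- `C` has the strong separation property. -/
def StrongSepProperty {X : Type*} [NormedAddCommGroup X] [NormedSpace ℝ X]
    (C : Set X) : Prop :=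
  ∀ D : Set X, D.Nonempty → IsClosed D → Convex ℝ D → Disjoint C D → StronglySeparated C D

/-- An unbounded set admits a continuous linear functional unbounded above on it. -/
theorem exists_unbounded_functional {X : Type*} [NormedAddCommGroup X] [NormedSpace ℝ X]
    (C : Set X) (hunbdd : ¬ Bornology.IsBounded C) :
    ∃ g : X →L[ℝ] ℝ, ∀ b : ℝ, ∃ c ∈ C, b < g c := by
  by_contra h
  push_neg at h
  apply hunbdd
  have hpt : ∀ f : StrongDual ℝ X, ∃ B, ∀ c : C,
      ‖(NormedSpace.inclusionInDoubleDual ℝ X c) f‖ ≤ B := by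
    intro f
    obtain ⟨b1, hb1⟩ := h f
    obtain ⟨b2, hb2⟩ := h (-f)
    refine ⟨max b1 b2, fun c => ?_⟩
    have h1 := hb1 c c.2
    have h2 := hb2 c c.2
    simp only [ContinuousLinearMap.neg_apply] at h2
    rw [NormedSpace.dual_def, Real.norm_eq_abs, abs_le]
    constructor
    · linarith [le_max_right b1 b2]
    · linarith [le_max_left b1 b2]
  obtain ⟨B, hB⟩ := banach_steinhaus hpt
  rw [isBounded_iff_forall_norm_le]
  refine ⟨B, fun x hx => ?_⟩
  have := hB ⟨x, hx⟩
  rwa [show ‖NormedSpace.inclusionInDoubleDual ℝ X x‖ = ‖x‖ from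
    (NormedSpace.inclusionInDoubleDualLi ℝ (E := X)).norm_map x] at this

/-- Let `C` be a nonempty unbounded closed convex subset of a real normed space `X`
having the strong separation property, satisfying one of the conditions
(A) `X` is a reflexive Banach space and `Int barc(C) ≠ ∅`,
(B) `C` is locally compact,
(C) `C ⊆ B(0; r) + Z` for some `r > 0` and finite-dimensional subspace `Z`.
Then `closure (aff C) = X`; moreover, if `aff C` is finite-dimensional then `aff C = X` and
`Int C ≠ ∅`. -/
theorem statement9 {X : Type*} [NormedAddCommGroup X] [NormedSpace ℝ X]
    (C : Set X) (hne : C.Nonempty) (hcl : IsClosed C) (hconv : Convex ℝ C)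
    (hunbdd : ¬ Bornology.IsBounded C)
    (hsep : StrongSepProperty C)
    (hcond :
      (CompleteSpace X ∧ Function.Surjective (NormedSpace.inclusionInDoubleDual ℝ X) ∧
        (interior (barrierCone C)).Nonempty) ∨
      (∃ c₀ ∈ C, ∃ r > (0 : ℝ), IsCompact (C ∩ Metric.closedBall c₀ r)) ∨
      (∃ r > (0 : ℝ), ∃ Z : Submodule ℝ X, FiniteDimensional ℝ Z ∧
        C ⊆ Metric.ball (0 : X) r + (Z : Set X))) :
    closure ((affineSpan ℝ C : AffineSubspace ℝ X) : Set X) = Set.univ ∧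
      (FiniteDimensional ℝ (affineSpan ℝ C).direction →
        affineSpan ℝ C = ⊤ ∧ (interior C).Nonempty) := by
  obtain ⟨g, hgub⟩ := exists_unbounded_functional C hunbdd
  obtain ⟨c0, hc0⟩ := hne
  have hclos : closure ((affineSpan ℝ C : AffineSubspace ℝ X) : Set X) = Set.univ := by
    by_contra hA
    obtain ⟨x0, hx0⟩ : ∃ x0, x0 ∉ closure ((affineSpan ℝ C : AffineSubspace ℝ X) : Set X) := by
      by_contra h'; push_neg at h'; exact hA (Set.eq_univ_of_forall h')
    obtain ⟨f, u, hfx0, hfb⟩ := geometric_hahn_banach_point_closed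
      ((affineSpan ℝ C).convex.closure) isClosed_closure hx0
    -- `f` is constant on the affine span of `C`
    have hc0' : c0 ∈ affineSpan ℝ C := subset_affineSpan ℝ C hc0
    have hconst : ∀ y ∈ affineSpan ℝ C, f y = f c0 := by
      intro y hy
      by_contra hne'
      set t : ℝ := (u - 1 - f c0) / (f y - f c0) with ht_def
      have hmem : t • (y -ᵥ c0) +ᵥ c0 ∈ affineSpan ℝ C :=
        AffineSubspace.smul_vsub_vadd_mem _ t hy hc0' hc0'
      have hlt : u < f (t • (y - c0) + c0) := by
        have := hfb _ (subset_closure hmem)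
        simpa [vsub_eq_sub, vadd_eq_add] using this
      have hval : f (t • (y - c0) + c0) = t * (f y - f c0) + f c0 := by
        simp [map_add, map_smul, map_sub]
      have ht : t * (f y - f c0) = u - 1 - f c0 :=
        div_mul_cancel₀ _ (sub_ne_zero.mpr hne')
      rw [hval, ht] at hlt; linarith
    have hfc0 : u < f c0 := hfb c0 (subset_closure hc0')
    set v : X := x0 - c0 with hv_def
    have hfv : f v < 0 := by
      have : f v = f x0 - f c0 := by simp [hv_def, map_sub]
      linarith [this ▸ (by linarith : f x0 - f c0 < 0)]
    have hfvne : f v ≠ 0 := ne_of_lt hfv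
    set τ : X → ℝ := fun z => (f z - f c0) * (f v)⁻¹ with hτ_def
    have hτcont : Continuous τ := by
      exact ((f.continuous.sub continuous_const).mul continuous_const)
    have hτval : ∀ y ∈ affineSpan ℝ C, ∀ t : ℝ, τ (y + t • v) = t := by
      intro y hy t
      simp only [hτ_def, map_add, map_smul, smul_eq_mul, hconst y hy]
      field_simp
      ring
    set D : Set X := {z | z - τ z • v ∈ C ∧ Real.exp (-(g (z - τ z • v))) ≤ τ z} with hD_def
    have hmemD : ∀ c' ∈ C, c' + Real.exp (-(g c')) • v ∈ D := by
      intro c' hc'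
      have ht := hτval c' (subset_affineSpan ℝ C hc') (Real.exp (-(g c')))
      constructor
      · rw [ht]; simpa using hc'
      · rw [ht]; simp
    have hDne : D.Nonempty := ⟨_, hmemD c0 hc0⟩
    have hDclosed : IsClosed D := by
      have hrw : D = (fun z => ((z - τ z • v : X), τ z)) ⁻¹'
          {p : X × ℝ | p.1 ∈ C ∧ Real.exp (-(g p.1)) ≤ p.2} := rfl
      rw [hrw]
      refine IsClosed.preimage ?_ ?_
      · exact (continuous_id.sub (hτcont.smul continuous_const)).prodMk hτcont
      · exact IsClosed.inter (hcl.preimage continuous_fst)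
          (isClosed_le (Real.continuous_exp.comp
            ((g.continuous.comp continuous_fst).neg)) continuous_snd)
    have hDconv : Convex ℝ D := by
      rintro z1 ⟨hy1, he1⟩ z2 ⟨hy2, he2⟩ lam mu hlam hmu hlm
      have hτw : τ (lam • z1 + mu • z2) = lam * τ z1 + mu * τ z2 := by
        simp only [hτ_def, map_add, map_smul, smul_eq_mul]
        linear_combination (f c0 * (f v)⁻¹) * hlm
      have hw : (lam • z1 + mu • z2) - τ (lam • z1 + mu • z2) • v
          = lam • (z1 - τ z1 • v) + mu • (z2 - τ z2 • v) := by
        rw [hτw]; module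
      constructor
      · rw [hw]; exact hconv hy1 hy2 hlam hmu hlm
      · rw [hw, hτw]
        have hgl : -(g (lam • (z1 - τ z1 • v) + mu • (z2 - τ z2 • v)))
            = lam * (-(g (z1 - τ z1 • v))) + mu * (-(g (z2 - τ z2 • v))) := by
          simp [map_add, map_smul]; ring
        rw [hgl]
        calc Real.exp (lam * (-(g (z1 - τ z1 • v))) + mu * (-(g (z2 - τ z2 • v))))
            ≤ lam * Real.exp (-(g (z1 - τ z1 • v))) + mu * Real.exp (-(g (z2 - τ z2 • v))) := by
              simpa [smul_eq_mul] using
                convexOn_exp.2 (Set.mem_univ (-(g (z1 - τ z1 • v))))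
                  (Set.mem_univ (-(g (z2 - τ z2 • v)))) hlam hmu hlm
          _ ≤ lam * τ z1 + mu * τ z2 := by
              gcongr <;> assumption
    have hdisj : Disjoint C D := by
      rw [Set.disjoint_left]
      rintro z hzC ⟨hz1, hz2⟩
      have hτz : τ z = 0 := by
        simp only [hτ_def]
        rw [hconst z (subset_affineSpan ℝ C hzC), sub_self, zero_mul]
      rw [hτz] at hz2
      exact absurd hz2 (not_le.mpr (Real.exp_pos _))
    obtain ⟨F, hF0, a, b, hab, hFa, hFb⟩ := hsep D hDne hDclosed hDconv hdisj
    set M : ℝ := -Real.log ((b - a) / (|F v| + 1)) with hM_def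
    obtain ⟨c, hcC, hMc⟩ := hgub M
    have h1 : b ≤ F c + Real.exp (-(g c)) * F v := by
      have := hFb _ (hmemD c hcC)
      simpa [map_add, map_smul, smul_eq_mul] using this
    have h2 : F c ≤ a := hFa c hcC
    have hposdiv : (0:ℝ) < (b - a) / (|F v| + 1) :=
      div_pos (sub_pos.mpr hab) (by positivity)
    have hexp : Real.exp (-(g c)) < (b - a) / (|F v| + 1) := by
      have hlt : Real.exp (-(g c)) < Real.exp (-M) := Real.exp_lt_exp.mpr (by linarith)
      rwa [hM_def, neg_neg, Real.exp_log hposdiv] at hlt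
    have hEA : Real.exp (-(g c)) * (|F v| + 1) < b - a :=
      (lt_div_iff₀ (by positivity)).mp hexp
    have hEF : Real.exp (-(g c)) * F v ≤ Real.exp (-(g c)) * |F v| :=
      mul_le_mul_of_nonneg_left (le_abs_self _) (Real.exp_pos _).le
    nlinarith [Real.exp_pos (-(g c))]
  refine ⟨hclos, fun hfd => ?_⟩
  haveI := hfd
  have hclosed : IsClosed ((affineSpan ℝ C : AffineSubspace ℝ X) : Set X) :=
    (affineSpan ℝ C).closed_of_finiteDimensional
  have htop : affineSpan ℝ C = ⊤ := by
    rw [← AffineSubspace.coe_eq_univ_iff, ← hclosed.closure_eq, hclos]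
  haveI hXfd : FiniteDimensional ℝ X := by
    have h1 : FiniteDimensional ℝ ((⊤ : AffineSubspace ℝ X).direction) := htop ▸ hfd
    rw [AffineSubspace.direction_top] at h1
    exact (Submodule.topEquiv : (⊤ : Submodule ℝ X) ≃ₗ[ℝ] X).finiteDimensional
  exact ⟨htop, (hconv.interior_nonempty_iff_affineSpan_eq_top).mpr htop⟩
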